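/- Let S be the numerical semigroup (additive submonoid of ℕ) generated by integers 0 < a_1 < ⋯ < a_r, and for s ∈ S let λ(s) = min{λ_1 + ⋯ + λ_r : λ_i ∈ ℕ, s = λ_1 a_1 + ⋯ + λ_r a_r}. Then lim_{s→∞} s/λ(s) = a_r along S; that is, for every real ε > 0 there exists N ∈ ℕ such that every s ∈ S with s ≥ N satisfies |s/λ(s) − a_r| < ε. -/

import Mathlib

/-- `lam a s` is the least total number of generators (counted with multiplicity)
needed to write `s` as an ℕ-linear combination of the `a i`. -/
noncomputable def lam {r : ℕ} (a : Fin r → ℕ) (s : ℕ) : ℕ :=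
  sInf {n | ∃ c : Fin r → ℕ, (∑ i, c i) = n ∧ (∑ i, c i * a i) = s}

lemma exists_rep {r : ℕ} (a : Fin (r + 1) → ℕ) {s : ℕ}
    (h : s ∈ AddSubmonoid.closure (Set.range a)) :
    ∃ c : Fin (r + 1) → ℕ, (∑ i, c i * a i) = s := by
  induction h using AddSubmonoid.closure_induction with
  | mem x hx =>
    obtain ⟨j, rfl⟩ := hx
    exact ⟨fun i => if i = j then 1 else 0, by simp [ite_mul, Finset.sum_ite_eq']⟩
  | zero => exact ⟨0, by simp⟩
  | add x y _ _ ihx ihy =>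
    obtain ⟨cx, hx⟩ := ihx
    obtain ⟨cy, hy⟩ := ihy
    exact ⟨cx + cy, by simp [add_mul, Finset.sum_add_distrib, hx, hy]⟩

/-- for the numerical semigroup `S` generated by
`0 < a_1 < ⋯ < a_r` (here `a 0, …, a (Fin.last r)`), one has
`lim_{s → ∞} s / λ(s) = a_r` along `S`. -/
theorem stmt0 {r : ℕ} (a : Fin (r + 1) → ℕ) (hpos : 0 < a 0) (hmono : StrictMono a) :
    ∀ ε : ℝ, 0 < ε → ∃ N : ℕ, ∀ s : ℕ,
      s ∈ AddSubmonoid.closure (Set.range a) → N ≤ s →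
      |(s : ℝ) / (lam a s : ℝ) - (a (Fin.last r) : ℝ)| < ε := by
  intro ε hε
  set A := a (Fin.last r) with hAdef
  have hA1 : 1 ≤ A := lt_of_lt_of_le hpos (hmono.monotone (Fin.zero_le _))
  refine ⟨⌈((r + 1 : ℕ) * (A : ℝ) ^ 3) / ε⌉₊ + 1, ?_⟩
  intro s hs hN
  have hspos : 0 < s := lt_of_lt_of_le (Nat.succ_pos _) hN
  obtain ⟨c0, hc0⟩ := exists_rep a hs
  have hne : {n | ∃ c : Fin (r + 1) → ℕ, (∑ i, c i) = n ∧ (∑ i, c i * a i) = s}.Nonempty :=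
    ⟨∑ i, c0 i, c0, rfl, hc0⟩
  obtain ⟨c, hcsum0, hcval⟩ := Nat.sInf_mem hne
  have hcsum : ∑ i, c i = lam a s := hcsum0
  clear hcsum0
  have hle : ∀ d : Fin (r + 1) → ℕ, (∑ i, d i * a i) = s → lam a s ≤ ∑ i, d i :=
    fun d hd => Nat.sInf_le ⟨d, rfl, hd⟩
  -- every coefficient except the last is < A in an optimal representation
  have hsmall : ∀ j : Fin (r + 1), j ≠ Fin.last r → c j < A := by
    intro j hj
    by_contra hge
    push_neg at hge
    set c' : Fin (r + 1) → ℕ := fun i =>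
      if i = j then c j - A else if i = Fin.last r then c (Fin.last r) + a j else c i with hc'
    have e1 : c' j = c j - A := by simp [hc']
    have e2 : c' (Fin.last r) = c (Fin.last r) + a j := by
      have h : (Fin.last r : Fin (r+1)) ≠ j := Ne.symm hj
      simp [hc', h]
    have e3 : ∀ i, i ≠ j → i ≠ Fin.last r → c' i = c i := by
      intro i h1 h2
      simp only [hc']
      rw [if_neg h1, if_neg h2]
    have hpt : ∀ i, c' i * a i + (if i = j then A * a j else 0)
        = c i * a i + (if i = Fin.last r then a j * A else 0) := by
      intro i
      by_cases h1 : i = j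
      · subst h1
        rw [if_pos rfl, if_neg hj, e1, add_zero, ← add_mul, Nat.sub_add_cancel hge]
      · by_cases h2 : i = Fin.last r
        · subst h2
          rw [if_neg h1, if_pos rfl, e2, add_zero, add_mul]
        · rw [if_neg h1, if_neg h2, e3 i h1 h2]
    have hval : ∑ i, c' i * a i + A * a j = ∑ i, c i * a i + a j * A := by
      have h := Finset.sum_congr rfl fun i (_ : i ∈ Finset.univ) => hpt i
      simpa [Finset.sum_add_distrib, Finset.sum_ite_eq'] using h
    have hval' : ∑ i, c' i * a i = s := by
      rw [mul_comm (a j) A] at hval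
      have h := Nat.add_right_cancel hval
      rw [h]; exact hcval
    have hpt2 : ∀ i, c' i + (if i = j then A else 0)
        = c i + (if i = Fin.last r then a j else 0) := by
      intro i
      by_cases h1 : i = j
      · subst h1
        rw [if_pos rfl, if_neg hj, e1, add_zero, Nat.sub_add_cancel hge]
      · by_cases h2 : i = Fin.last r
        · subst h2
          rw [if_neg h1, if_pos rfl, e2, add_zero]
        · rw [if_neg h1, if_neg h2, e3 i h1 h2]
    have hsum : ∑ i, c' i + A = ∑ i, c i + a j := by
      have h := Finset.sum_congr rfl fun i (_ : i ∈ Finset.univ) => hpt2 i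
      simpa [Finset.sum_add_distrib, Finset.sum_ite_eq'] using h
    have hlt : a j < A := hmono (lt_of_le_of_ne (Fin.le_last j) hj)
    have h2 := hle c' hval'
    omega
  have hlampos : 0 < lam a s := by
    rcases Nat.eq_zero_or_pos (lam a s) with h0 | h
    · exfalso
      rw [h0] at hcsum
      have hz : ∀ i ∈ Finset.univ, c i = 0 := fun i hi =>
        Finset.sum_eq_zero_iff.mp hcsum i hi
      have hs0 : s = 0 := by
        rw [← hcval]
        exact Finset.sum_eq_zero fun i hi => by rw [hz i hi, zero_mul]
      omega
    · exact h
  -- upper bound: s ≤ lam * A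
  have hub : s ≤ lam a s * A := by
    calc s = ∑ i, c i * a i := hcval.symm
    _ ≤ ∑ i, c i * A := Finset.sum_le_sum fun i _ =>
        Nat.mul_le_mul_left _ (hmono.monotone (Fin.le_last i))
    _ = (∑ i, c i) * A := (Finset.sum_mul _ _ _).symm
    _ = lam a s * A := by rw [hcsum]
  -- lower bound: lam * A ≤ s + (r+1) * A * A
  have hlb : lam a s * A ≤ s + (r + 1) * (A * A) := by
    have hclastA : c (Fin.last r) * A ≤ s := by
      rw [← hcval]
      exact Finset.single_le_sum (f := fun i => c i * a i) (fun i _ => Nat.zero_le _)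
        (Finset.mem_univ (Fin.last r))
    have hsplit : lam a s * A = ∑ i ∈ Finset.univ.erase (Fin.last r), c i * A
        + c (Fin.last r) * A := by
      rw [← hcsum, Finset.sum_mul]
      exact (Finset.sum_erase_add _ _ (Finset.mem_univ _)).symm
    rw [hsplit]
    have h1 : ∑ i ∈ Finset.univ.erase (Fin.last r), c i * A
        ≤ ∑ i ∈ Finset.univ.erase (Fin.last r), A * A :=
      Finset.sum_le_sum fun i hi =>
        Nat.mul_le_mul_right _ (le_of_lt (hsmall i (Finset.ne_of_mem_erase hi)))
    have h2 : ∑ i ∈ Finset.univ.erase (Fin.last r), A * A ≤ (r + 1) * (A * A) := by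
      rw [Finset.sum_const, smul_eq_mul]
      exact Nat.mul_le_mul_right _ (le_trans (Finset.card_le_univ _) (by simp))
    exact (Nat.add_le_add ((h1.trans h2)) hclastA).trans_eq (Nat.add_comm _ _)
  -- real arithmetic
  have hN' : ((r + 1 : ℕ) * (A : ℝ) ^ 3) / ε < (s : ℝ) := by
    have h1 : ((r + 1 : ℕ) * (A : ℝ) ^ 3) / ε ≤ (⌈((r + 1 : ℕ) * (A : ℝ) ^ 3) / ε⌉₊ : ℝ) :=
      Nat.le_ceil _
    have h2 : (⌈((r + 1 : ℕ) * (A : ℝ) ^ 3) / ε⌉₊ : ℝ) + 1 ≤ (s : ℝ) := by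
      exact_mod_cast hN
    linarith
  have hkey : ((r + 1 : ℕ) * (A : ℝ) ^ 3) < ε * s := by
    rw [div_lt_iff₀ hε] at hN'
    linarith
  have hL1 : (1 : ℝ) ≤ (lam a s : ℝ) := by exact_mod_cast hlampos
  have hA1' : (1 : ℝ) ≤ (A : ℝ) := by exact_mod_cast hA1
  have hS1 : (1 : ℝ) ≤ (s : ℝ) := by exact_mod_cast hspos
  have hub' : (s : ℝ) ≤ (lam a s : ℝ) * A := by exact_mod_cast hub
  have hlb' : (lam a s : ℝ) * A ≤ (s : ℝ) + (r + 1 : ℕ) * ((A : ℝ) * A) := by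
    exact_mod_cast hlb
  have hLpos : (0 : ℝ) < (lam a s : ℝ) := by linarith
  have hx : (s : ℝ) / (lam a s : ℝ) * (lam a s : ℝ) = s := div_mul_cancel₀ _ (ne_of_gt hLpos)
  set x := (s : ℝ) / (lam a s : ℝ) with hxdef
  have hxA : x ≤ A := by
    rw [hxdef, div_le_iff₀ hLpos]
    linarith [mul_comm (lam a s : ℝ) (A : ℝ)]
  rw [abs_lt]
  constructor
  · -- -ε < x - A : need A - x < ε
    nlinarith [mul_pos hLpos (lt_of_lt_of_le zero_lt_one hA1'), hx,
      mul_le_mul_of_nonneg_right hxA (le_of_lt hLpos)]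
  · linarith
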